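/- The BCH-recursion χ satisfies the simplified recursion χ(u) = u + BCH(−P(χ(u)), u) for all u ∈ A_1; i.e., the fixed point of a ↦ a − BCH(P(a'), (id−P)(a')) in a' coincides with the fixed point of a' ↦ u + BCH(−P(a'), u). -/

import Mathlib

open scoped BigOperators

noncomputable def expS (K : Type*) {A : Type*} [Field K] [CharZero K] [Ring A] [Algebra K A]
    [UniformSpace A] (a : A) : A :=
  ∑' n : ℕ, ((n.factorial : K)⁻¹) • a ^ n

noncomputable def logS (K : Type*) {A : Type*} [Field K] [CharZero K] [Ring A] [Algebra K A]
    [UniformSpace A] (a : A) : A :=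
  ∑' n : ℕ, (((-1 : K) ^ n) * ((n : K) + 1)⁻¹) • (a - 1) ^ (n + 1)

noncomputable def BCHs (K : Type*) {A : Type*} [Field K] [CharZero K] [Ring A] [Algebra K A]
    [UniformSpace A] (x y : A) : A :=
  logS K (expS K x * expS K y) - x - y

/-- A complete decreasing multiplicative filtration defining the topology of `A`. -/
def IsCompleteFiltration (K : Type*) {A : Type*} [Field K] [CharZero K] [Ring A] [Algebra K A]
    [UniformSpace A] (F : ℕ → Submodule K A) : Prop :=
  F 0 = ⊤ ∧ (∀ n, F (n + 1) ≤ F n) ∧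
    (∀ m n : ℕ, ∀ x ∈ F m, ∀ y ∈ F n, x * y ∈ F (m + n)) ∧
    (∀ n, IsOpen ((F n : Set A))) ∧
    (∀ U ∈ nhds (0 : A), ∃ n, ((F n : Set A)) ⊆ U)

variable {K : Type*} [Field K] [CharZero K] {A : Type*} [Ring A] [Algebra K A]
  [UniformSpace A] [CompleteSpace A] [T2Space A] [IsTopologicalRing A]
  [IsUniformAddGroup A]


open PowerSeries Finset Filter Topology
set_option linter.unusedSectionVars false
set_option linter.unusedVariables false
set_option maxHeartbeats 1000000

section FormalPart
variable {K : Type*} [Field K] [CharZero K]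


noncomputable def Lser (K : Type*) [Field K] : PowerSeries K :=
  PowerSeries.mk fun n => (-1) ^ (n + 1) * (n : K)⁻¹

noncomputable def compSer (g f : PowerSeries K) : PowerSeries K :=
  PowerSeries.mk fun n =>
    ∑ k ∈ Finset.range (n + 1), (PowerSeries.coeff k g) * PowerSeries.coeff n (f ^ k)

theorem coeff_Lser (n : ℕ) : coeff n (Lser K) = (-1) ^ (n + 1) * (n : K)⁻¹ := by
  simp [Lser]

theorem constantCoeff_Lser : constantCoeff (Lser K) = 0 := by
  rw [← coeff_zero_eq_constantCoeff, coeff_Lser]; simp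

theorem coeff_exp' (n : ℕ) : coeff n (exp K) = ((n.factorial : K))⁻¹ := by
  rw [PowerSeries.coeff_exp]
  rw [eq_comm, inv_eq_iff_eq_inv]
  push_cast [map_div₀]
  simp

theorem coeff_pow_eq_zero {f : PowerSeries K} (hf : constantCoeff f = 0) :
    ∀ k n, n < k → coeff n (f ^ k) = 0 := by
  intro k
  induction k with
  | zero => intro n hn; omega
  | succ k ih =>
    intro n hn
    rw [pow_succ, PowerSeries.coeff_mul]
    apply Finset.sum_eq_zero
    rintro ⟨i, j⟩ hij
    rw [Finset.HasAntidiagonal.mem_antidiagonal] at hij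
    rcases lt_or_ge i k with h | h
    · rw [ih i h, zero_mul]
    · have : j = 0 := by omega
      subst this
      rw [coeff_zero_eq_constantCoeff, hf, mul_zero]

theorem coeff_dL (n : ℕ) : coeff n (d⁄dX K (Lser K)) = (-1) ^ n := by
  rw [PowerSeries.coeff_derivative, coeff_Lser]
  have h : ((n : K) + 1) ≠ 0 := Nat.cast_add_one_ne_zero n
  push_cast
  rw [mul_assoc, inv_mul_cancel₀ h, mul_one, pow_succ, pow_succ]
  ring

theorem one_add_X_mul_dL : (1 + X) * d⁄dX K (Lser K) = 1 := by
  ext n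
  rcases n with _ | n
  · rw [add_mul, one_mul, map_add, coeff_zero_X_mul, coeff_dL]
    simp
  · rw [add_mul, one_mul, map_add, coeff_succ_X_mul, coeff_dL, coeff_dL, coeff_one]
    simp [pow_succ]

theorem deriv_compSer_exp :
    d⁄dX K (compSer (PowerSeries.exp K) (Lser K)) =
      compSer (PowerSeries.exp K) (Lser K) * d⁄dX K (Lser K) := by
  ext n
  have key : ∀ i : ℕ, coeff (n+1) (Lser K ^ (i+1)) * ((n:K)+1)
      = ((i:K)+1) * coeff n (Lser K ^ i * d⁄dX K (Lser K)) := by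
    intro i
    rw [← PowerSeries.coeff_derivative, Derivation.leibniz_pow, Nat.add_sub_cancel, map_nsmul]
    simp only [smul_eq_mul]
    rw [nsmul_eq_mul]
    push_cast
    ring
  have efact : ∀ i : ℕ, coeff (i+1) (exp K) * ((i:K)+1) = coeff i (exp K) := by
    intro i
    rw [coeff_exp', coeff_exp', Nat.factorial_succ]
    have h1 : ((i.factorial : K)) ≠ 0 := Nat.cast_ne_zero.mpr (Nat.factorial_ne_zero i)
    have h2 : ((i : K) + 1) ≠ 0 := Nat.cast_add_one_ne_zero i
    push_cast
    field_simp
  calc coeff n (d⁄dX K (compSer (exp K) (Lser K)))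
      = ∑ k ∈ range (n+2), coeff k (exp K) * coeff (n+1) (Lser K ^ k) * ((n:K)+1) := by
        rw [PowerSeries.coeff_derivative, compSer, coeff_mk, Finset.sum_mul]
    _ = ∑ i ∈ range (n+1), coeff i (exp K) * coeff n (Lser K ^ i * d⁄dX K (Lser K)) := by
        rw [Finset.sum_range_succ']
        have h0 : coeff 0 (exp K) * coeff (n+1) (Lser K ^ 0) * ((n:K)+1) = 0 := by
          simp [pow_zero, coeff_one]
        rw [h0, add_zero]
        apply Finset.sum_congr rfl
        intro i _
        rw [mul_assoc, key i, ← mul_assoc, efact i]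
    _ = coeff n (compSer (exp K) (Lser K) * d⁄dX K (Lser K)) := by
        rw [PowerSeries.coeff_mul]
        have hG : ∀ p ∈ antidiagonal n, coeff p.1 (compSer (exp K) (Lser K)) =
            ∑ k ∈ range (n+1), coeff k (exp K) * coeff p.1 (Lser K ^ k) := by
          intro p hp
          rw [Finset.HasAntidiagonal.mem_antidiagonal] at hp
          rw [compSer, coeff_mk]
          apply Finset.sum_subset
          · exact Finset.range_subset_range.mpr (by omega)
          · intro k _ hk
            rw [Finset.mem_range, not_lt] at hk
            rw [coeff_pow_eq_zero constantCoeff_Lser k p.1 (by omega), mul_zero]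
        symm
        calc ∑ p ∈ antidiagonal n, coeff p.1 (compSer (exp K) (Lser K)) * coeff p.2 (d⁄dX K (Lser K))
            = ∑ p ∈ antidiagonal n, ∑ k ∈ range (n+1), coeff k (exp K) * coeff p.1 (Lser K ^ k) * coeff p.2 (d⁄dX K (Lser K)) := by
              refine Finset.sum_congr rfl fun p hp => ?_
              rw [hG p hp, Finset.sum_mul]
          _ = ∑ k ∈ range (n+1), ∑ p ∈ antidiagonal n, coeff k (exp K) * (coeff p.1 (Lser K ^ k) * coeff p.2 (d⁄dX K (Lser K))) := by
              rw [Finset.sum_comm]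
              exact Finset.sum_congr rfl fun k _ => Finset.sum_congr rfl fun p _ => by ring
          _ = ∑ k ∈ range (n+1), coeff k (exp K) * coeff n (Lser K ^ k * d⁄dX K (Lser K)) := by
              refine Finset.sum_congr rfl fun k _ => ?_
              rw [← Finset.mul_sum, PowerSeries.coeff_mul]

theorem compSer_exp_Lser : compSer (PowerSeries.exp K) (Lser K) = 1 + X := by
  set G := compSer (PowerSeries.exp K) (Lser K) with hGdef
  have hode : (1 + X) * d⁄dX K G = G := by
    rw [hGdef, deriv_compSer_exp, ← hGdef]
    calc (1 + X) * (G * d⁄dX K (Lser K)) = G * ((1 + X) * d⁄dX K (Lser K)) := by ring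
      _ = G := by rw [one_add_X_mul_dL, mul_one]
  have h0 : coeff 0 G = 1 := by
    rw [hGdef, compSer, coeff_mk]
    simp
  have h1 : coeff 1 G = 1 := by
    have h := congrArg (coeff 0) hode
    rw [add_mul, one_mul, map_add, coeff_zero_X_mul, add_zero,
      PowerSeries.coeff_derivative, h0] at h
    simpa using h
  have hstep : ∀ n : ℕ, coeff (n+2) G * ((n:K)+2) = coeff (n+1) G * (-(n:K)) := by
    intro n
    have h := congrArg (coeff (n+1)) hode
    rw [add_mul, one_mul, map_add, coeff_succ_X_mul, PowerSeries.coeff_derivative,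
      PowerSeries.coeff_derivative] at h
    push_cast at h
    linear_combination h
  have hzero : ∀ n : ℕ, coeff (n+2) G = 0 := by
    intro n
    induction n with
    | zero =>
      have h := hstep 0
      have h2 : ((0:K)+2) ≠ 0 := by norm_num
      rw [Nat.cast_zero, neg_zero, mul_zero] at h
      exact (mul_eq_zero.mp h).resolve_right h2
    | succ k ih =>
      have h := hstep (k+1)
      rw [ih, zero_mul] at h
      have h2 : (((k+1:ℕ)):K)+2 ≠ 0 := by
        have h3 : (((k+3:ℕ)):K) ≠ 0 := Nat.cast_ne_zero.mpr (by omega)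
        push_cast at h3 ⊢
        intro hc
        exact h3 (by linear_combination hc)
      exact (mul_eq_zero.mp h).resolve_right h2
  ext n
  rcases n with _ | n
  · rw [h0, map_add, coeff_one, coeff_X]
    norm_num
  · rcases n with _ | n
    · rw [h1, map_add, coeff_one, coeff_X]
      norm_num
    · rw [hzero n, map_add, coeff_one, coeff_X]
      norm_num

end FormalPart

section AnalyticPart
variable {K : Type*} [Field K] [CharZero K] {A : Type*} [Ring A] [Algebra K A]
  [UniformSpace A] [CompleteSpace A] [T2Space A] [IsTopologicalRing A]
  [IsUniformAddGroup A] {F : ℕ → Submodule K A}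

noncomputable def ev (f : PowerSeries K) (x : A) : A :=
  ∑' n : ℕ, (PowerSeries.coeff n f) • x ^ n

theorem hFanti (hF : IsCompleteFiltration K F) : ∀ {m n : ℕ}, m ≤ n → F n ≤ F m := by
  intro m n h
  induction h with
  | refl => exact le_rfl
  | step _ ih => exact le_trans (hF.2.1 _) ih

theorem hFclosed (hF : IsCompleteFiltration K F) (n : ℕ) : IsClosed ((F n : Set A)) :=
  AddSubgroup.isClosed_of_isOpen (F n).toAddSubgroup (hF.2.2.2.1 n)

theorem mem_all_eq_zero (hF : IsCompleteFiltration K F) {z : A} (hz : ∀ n, z ∈ F n) : z = 0 := by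
  have h0 : (0 : A) ∈ closure ({z} : Set A) := by
    rw [mem_closure_iff_nhds]
    intro U hU
    obtain ⟨n, hn⟩ := hF.2.2.2.2 U hU
    exact ⟨z, hn (hz n), rfl⟩
  rw [closure_singleton] at h0
  exact (Set.mem_singleton_iff.mp h0).symm

theorem pow_mem' (hF : IsCompleteFiltration K F) {x : A} (hx : x ∈ F 1) :
    ∀ n, x ^ n ∈ F n := by
  intro n
  induction n with
  | zero => rw [pow_zero]; rw [hF.1]; trivial
  | succ n ih => rw [pow_succ]; exact hF.2.2.1 n 1 _ ih _ hx

theorem summable_of_mem (hF : IsCompleteFiltration K F) {t : ℕ → A}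
    (ht : ∀ n, t n ∈ F n) : Summable t := by
  rw [summable_iff_vanishing]
  intro e he
  obtain ⟨n, hn⟩ := hF.2.2.2.2 e he
  refine ⟨Finset.range n, fun s hs => hn ?_⟩
  refine Submodule.sum_mem _ fun i hi => ?_
  have hni : n ≤ i := by
    by_contra hlt
    exact (Finset.disjoint_left.mp hs hi) (Finset.mem_range.mpr (by omega))
  exact hFanti hF hni (ht i)

theorem tsum_mem' (hF : IsCompleteFiltration K F) {t : ℕ → A} {m : ℕ}
    (ht : ∀ n, t n ∈ F m) (hs : Summable t) : ∑' n, t n ∈ F m := by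
  refine (hFclosed hF m).mem_of_tendsto hs.hasSum ?_
  filter_upwards with s using Submodule.sum_mem _ fun i _ => ht i

theorem lim_mem (hF : IsCompleteFiltration K F) {g : ℕ → A} {z : A}
    (hg : Tendsto g atTop (nhds z)) (h : ∀ N, g N ∈ F N) : z = 0 := by
  refine mem_all_eq_zero hF fun m => ?_
  refine (hFclosed hF m).mem_of_tendsto hg ?_
  filter_upwards [eventually_ge_atTop m] with N hN using hFanti hF hN (h N)

theorem ev_summand_mem (hF : IsCompleteFiltration K F) (f : PowerSeries K) {x : A}
    (hx : x ∈ F 1) (n : ℕ) : (PowerSeries.coeff n f) • x ^ n ∈ F n :=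
  Submodule.smul_mem _ _ (pow_mem' hF hx n)

theorem ev_hasSum (hF : IsCompleteFiltration K F) (f : PowerSeries K) {x : A} (hx : x ∈ F 1) :
    HasSum (fun n => (PowerSeries.coeff n f) • x ^ n) (ev f x) :=
  (summable_of_mem hF (ev_summand_mem hF f hx)).hasSum

theorem ev_mem (hF : IsCompleteFiltration K F) {f : PowerSeries K} {x : A} (hx : x ∈ F 1)
    {m : ℕ} (hc : ∀ n, n < m → PowerSeries.coeff n f = 0) : ev f x ∈ F m := by
  refine tsum_mem' hF (fun n => ?_) (ev_hasSum hF f hx).summable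
  rcases lt_or_ge n m with h | h
  · rw [hc n h, zero_smul]; exact zero_mem _
  · exact hFanti hF h (ev_summand_mem hF f hx n)

theorem ev_add (hF : IsCompleteFiltration K F) (f g : PowerSeries K) {x : A} (hx : x ∈ F 1) :
    ev (f + g) x = ev f x + ev g x := by
  rw [ev]
  simp_rw [map_add, add_smul]
  exact Summable.tsum_add (ev_hasSum hF f hx).summable (ev_hasSum hF g hx).summable

theorem ev_sub (hF : IsCompleteFiltration K F) (f g : PowerSeries K) {x : A} (hx : x ∈ F 1) :
    ev (f - g) x = ev f x - ev g x := by
  rw [ev]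
  simp_rw [map_sub, sub_smul]
  exact Summable.tsum_sub (ev_hasSum hF f hx).summable (ev_hasSum hF g hx).summable

theorem ev_smul (hF : IsCompleteFiltration K F) (c : K) (f : PowerSeries K) {x : A}
    (hx : x ∈ F 1) : ev (c • f) x = c • ev f x := by
  have h := (ev_hasSum hF f hx).mul_left (algebraMap K A c)
  have he : ∀ n : ℕ, (PowerSeries.coeff n (c • f)) • x ^ n
      = algebraMap K A c * ((PowerSeries.coeff n f) • x ^ n) := by
    intro n
    rw [map_smul, smul_eq_mul, mul_smul, Algebra.smul_def]
  rw [ev, tsum_congr he, h.tsum_eq, ← Algebra.smul_def]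

theorem ev_one (hF : IsCompleteFiltration K F) {x : A} (hx : x ∈ F 1) : ev (1 : PowerSeries K) x = 1 := by
  rw [ev, tsum_eq_single 0]
  · simp
  · intro n hn
    rw [PowerSeries.coeff_one, if_neg hn, zero_smul]

theorem ev_X (hF : IsCompleteFiltration K F) {x : A} (hx : x ∈ F 1) : ev (X : PowerSeries K) x = x := by
  rw [ev, tsum_eq_single 1]
  · simp
  · intro n hn
    rw [PowerSeries.coeff_X, if_neg hn, zero_smul]

theorem ev_mul (hF : IsCompleteFiltration K F) (f g : PowerSeries K) {x : A} (hx : x ∈ F 1) :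
    ev f x * ev g x = ev (f * g) x := by
  have hfg : Tendsto (fun N => (∑ n ∈ range N, (PowerSeries.coeff n f) • x ^ n) *
      (∑ n ∈ range N, (PowerSeries.coeff n g) • x ^ n)) atTop (nhds (ev f x * ev g x)) :=
    ((ev_hasSum hF f hx).tendsto_sum_nat).mul ((ev_hasSum hF g hx).tendsto_sum_nat)
  have hc : Tendsto (fun N => ∑ n ∈ range N, (PowerSeries.coeff n (f * g)) • x ^ n) atTop
      (nhds (ev (f * g) x)) := (ev_hasSum hF (f * g) hx).tendsto_sum_nat
  have key : ∀ N, (∑ n ∈ range N, (PowerSeries.coeff n f) • x ^ n) *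
      (∑ n ∈ range N, (PowerSeries.coeff n g) • x ^ n) -
      (∑ n ∈ range N, (PowerSeries.coeff n (f * g)) • x ^ n) ∈ F N := by
    intro N
    have e1 : (∑ n ∈ range N, (PowerSeries.coeff n f) • x ^ n) *
        (∑ n ∈ range N, (PowerSeries.coeff n g) • x ^ n)
        = ∑ p ∈ range N ×ˢ range N,
            (PowerSeries.coeff p.1 f * PowerSeries.coeff p.2 g) • x ^ (p.1 + p.2) := by
      rw [Finset.sum_mul_sum]
      rw [Finset.sum_product]
      refine Finset.sum_congr rfl fun i _ => Finset.sum_congr rfl fun j _ => ?_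
      rw [smul_mul_smul_comm, pow_add]
    have hdisj : (↑(range N) : Set ℕ).PairwiseDisjoint (fun n => antidiagonal n) := by
      intro a _ b _ hab
      refine Finset.disjoint_left.mpr fun p hpa hpb => hab ?_
      rw [← Finset.HasAntidiagonal.mem_antidiagonal.mp hpa, Finset.HasAntidiagonal.mem_antidiagonal.mp hpb]
    have e2 : (∑ n ∈ range N, (PowerSeries.coeff n (f * g)) • x ^ n)
        = ∑ p ∈ (range N).biUnion (fun n => antidiagonal n),
            (PowerSeries.coeff p.1 f * PowerSeries.coeff p.2 g) • x ^ (p.1 + p.2) := by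
      rw [Finset.sum_biUnion hdisj]
      refine Finset.sum_congr rfl fun n hn => ?_
      rw [PowerSeries.coeff_mul, Finset.sum_smul]
      refine Finset.sum_congr rfl fun p hp => ?_
      rw [Finset.HasAntidiagonal.mem_antidiagonal.mp hp]
    have hsub : (range N).biUnion (fun n => antidiagonal n) ⊆ range N ×ˢ range N := by
      intro p hp
      obtain ⟨n, hn, hpn⟩ := Finset.mem_biUnion.mp hp
      rw [Finset.mem_range] at hn
      have := Finset.HasAntidiagonal.mem_antidiagonal.mp hpn
      rw [Finset.mem_product, Finset.mem_range, Finset.mem_range]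
      omega
    rw [e1, e2, ← Finset.sum_sdiff hsub, add_sub_cancel_right]
    refine Submodule.sum_mem _ fun p hp => ?_
    have hge : N ≤ p.1 + p.2 := by
      rcases Finset.mem_sdiff.mp hp with ⟨_, hnp⟩
      by_contra hlt
      push_neg at hlt
      exact hnp (Finset.mem_biUnion.mpr
        ⟨p.1 + p.2, Finset.mem_range.mpr hlt, Finset.HasAntidiagonal.mem_antidiagonal.mpr rfl⟩)
    exact hFanti hF hge (Submodule.smul_mem _ _ (pow_mem' hF hx _))
  exact sub_eq_zero.mp (lim_mem hF (hfg.sub hc) key)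

theorem ev_pow (hF : IsCompleteFiltration K F) (f : PowerSeries K) {x : A} (hx : x ∈ F 1) :
    ∀ k : ℕ, (ev f x) ^ k = ev (f ^ k) x := by
  intro k
  induction k with
  | zero => rw [pow_zero, pow_zero, ev_one hF hx]
  | succ k ih => rw [pow_succ, pow_succ, ih, ev_mul hF _ _ hx]

theorem ev_zero (hF : IsCompleteFiltration K F) {x : A} (hx : x ∈ F 1) :
    ev (0 : PowerSeries K) x = 0 := by
  simp [ev]

theorem ev_sum (hF : IsCompleteFiltration K F) (s : Finset ℕ) (f : ℕ → PowerSeries K) {x : A}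
    (hx : x ∈ F 1) : ev (∑ k ∈ s, f k) x = ∑ k ∈ s, ev (f k) x := by
  classical
  induction s using Finset.induction_on with
  | empty => rw [Finset.sum_empty, Finset.sum_empty, ev_zero hF hx]
  | insert _ _ hns ih =>
    rw [Finset.sum_insert hns, Finset.sum_insert hns, ev_add hF _ _ hx, ih]

theorem ev_comp (hF : IsCompleteFiltration K F) {f g : PowerSeries K}
    (hf0 : constantCoeff f = 0) {x : A} (hx : x ∈ F 1) :
    ev g (ev f x) = ev (compSer g f) x := by
  have hz : ev f x ∈ F 1 := by
    refine ev_mem hF hx fun n hn => ?_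
    have hn0 : n = 0 := by omega
    subst hn0
    rw [coeff_zero_eq_constantCoeff]
    exact hf0
  refine sub_eq_zero.mp (mem_all_eq_zero hF fun M => ?_)
  have hsum := (ev_hasSum hF g hz).summable
  have h1 : ev g (ev f x) - ∑ k ∈ range M, (PowerSeries.coeff k g) • (ev f x) ^ k ∈ F M := by
    have hsplit := Summable.sum_add_tsum_nat_add
      (f := fun k => (PowerSeries.coeff k g) • (ev f x) ^ k) M hsum
    have heq : ev g (ev f x) - ∑ k ∈ range M, (PowerSeries.coeff k g) • (ev f x) ^ k
        = ∑' k, (PowerSeries.coeff (k + M) g) • (ev f x) ^ (k + M) := by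
      rw [ev, ← hsplit, add_sub_cancel_left]
    rw [heq]
    refine tsum_mem' hF (fun k => hFanti hF (Nat.le_add_left M k) ?_)
      ((summable_nat_add_iff M).mpr hsum)
    exact ev_summand_mem hF g hz (k + M)
  have h2 : (∑ k ∈ range M, (PowerSeries.coeff k g) • (ev f x) ^ k)
      = ev (∑ k ∈ range M, (PowerSeries.coeff k g) • f ^ k) x := by
    rw [ev_sum hF _ _ hx]
    refine Finset.sum_congr rfl fun k _ => ?_
    rw [ev_smul hF _ _ hx, ev_pow hF _ hx]
  have h3 : ev (compSer g f) x
      - ev (∑ k ∈ range M, (PowerSeries.coeff k g) • f ^ k) x ∈ F M := by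
    rw [← ev_sub hF _ _ hx]
    refine ev_mem hF hx fun n hn => ?_
    rw [map_sub, compSer, coeff_mk, map_sum]
    simp_rw [map_smul, smul_eq_mul]
    rw [sub_eq_zero]
    refine Finset.sum_subset (Finset.range_subset_range.mpr (by omega)) fun k _ hk => ?_
    rw [Finset.mem_range, not_lt] at hk
    rw [coeff_pow_eq_zero hf0 k n (by omega), mul_zero]
  have hdecomp : ev g (ev f x) - ev (compSer g f) x
      = (ev g (ev f x) - ∑ k ∈ range M, (PowerSeries.coeff k g) • (ev f x) ^ k)
        - (ev (compSer g f) x - ev (∑ k ∈ range M, (PowerSeries.coeff k g) • f ^ k) x) := by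
    rw [h2]
    abel
  rw [hdecomp]
  exact sub_mem h1 h3

theorem coeff_negExp (n : ℕ) :
    PowerSeries.coeff n (evalNegHom (exp K)) = (-1) ^ n * ((n.factorial : K))⁻¹ := by
  rw [show (evalNegHom (exp K) : PowerSeries K) = rescale (-1 : K) (exp K) from rfl,
    coeff_rescale, coeff_exp']

theorem expS_eq (x : A) : expS K x = ev (PowerSeries.exp K) x :=
  tsum_congr fun n => by rw [coeff_exp']

theorem expS_neg_eq (x : A) : expS K (-x) = ev (evalNegHom (exp K)) x := by
  refine tsum_congr fun n => ?_
  rw [coeff_negExp, show (-x) = (-1 : K) • x from (neg_one_smul K x).symm, smul_pow, smul_smul,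
    mul_comm ((n.factorial : K))⁻¹]

theorem logS_eq (hF : IsCompleteFiltration K F) {a : A} (ha : a - 1 ∈ F 1) :
    logS K a = ev (Lser K) (a - 1) := by
  rw [ev, Summable.tsum_eq_zero_add (ev_hasSum hF (Lser K) ha).summable]
  rw [coeff_Lser]
  norm_num
  refine tsum_congr fun n => ?_
  rw [coeff_Lser]
  congr 1
  push_cast
  rw [pow_succ, pow_succ]
  ring

theorem expS_sub_one_mem (hF : IsCompleteFiltration K F) {x : A} (hx : x ∈ F 1) :
    expS K x - 1 ∈ F 1 := by
  rw [expS_eq, ← ev_one hF hx, ← ev_sub hF _ _ hx]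
  refine ev_mem hF hx fun n hn => ?_
  have hn0 : n = 0 := by omega
  subst hn0
  rw [map_sub, coeff_exp', PowerSeries.coeff_one]
  norm_num

theorem logS_mem (hF : IsCompleteFiltration K F) {a : A} (ha : a - 1 ∈ F 1) :
    logS K a ∈ F 1 := by
  rw [logS_eq hF ha]
  refine ev_mem hF ha fun n hn => ?_
  have hn0 : n = 0 := by omega
  subst hn0
  rw [coeff_Lser]
  norm_num

theorem exp_logS (hF : IsCompleteFiltration K F) {a : A} (ha : a - 1 ∈ F 1) :
    expS K (logS K a) = a := by
  rw [logS_eq hF ha, expS_eq, ev_comp hF constantCoeff_Lser ha, compSer_exp_Lser,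
    ev_add hF _ _ ha, ev_one hF ha, ev_X hF ha]
  abel

theorem exp_neg_mul_exp (hF : IsCompleteFiltration K F) {x : A} (hx : x ∈ F 1) :
    expS K (-x) * expS K x = 1 := by
  rw [expS_neg_eq, expS_eq, ev_mul hF _ _ hx, mul_comm (evalNegHom (exp K)) (exp K),
    exp_mul_exp_neg_eq_one, ev_one hF hx]

theorem exp_inj (hF : IsCompleteFiltration K F) {x y : A} (hx : x ∈ F 1) (hy : y ∈ F 1)
    (h : expS K x = expS K y) : x = y := by
  have hpow : ∀ m : ℕ, x - y ∈ F m → ∀ n : ℕ, x ^ (n + 1) - y ^ (n + 1) ∈ F (m + n) := by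
    intro m hm n
    induction n with
    | zero => simpa using hm
    | succ n ih =>
      have hiden : x ^ (n + 1 + 1) - y ^ (n + 1 + 1)
          = x ^ (n + 1) * (x - y) + (x ^ (n + 1) - y ^ (n + 1)) * y := by
        rw [pow_succ x (n + 1), pow_succ y (n + 1), mul_sub, sub_mul]
        abel
      rw [hiden]
      refine add_mem ?_ ?_
      · exact hFanti hF (by omega) (hF.2.2.1 (n + 1) m _ (pow_mem' hF hx (n + 1)) _ hm)
      · exact hFanti hF (le_refl _) (hF.2.2.1 (m + n) 1 _ ih _ hy)
  have hsx := (summable_of_mem hF fun n =>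
    (Submodule.smul_mem _ ((n.factorial : K))⁻¹ (sub_mem (pow_mem' hF hx n) (pow_mem' hF hy n)) :
      ((n.factorial : K))⁻¹ • (x ^ n - y ^ n) ∈ F n))
  have hd : ∀ m : ℕ, x - y ∈ F m := by
    intro m
    induction m with
    | zero => rw [hF.1]; trivial
    | succ m ih =>
      have hzero : (0 : A) = ∑' n : ℕ, ((n.factorial : K))⁻¹ • (x ^ n - y ^ n) := by
        have hts := Summable.tsum_sub (summable_of_mem hF fun n =>
            (Submodule.smul_mem _ _ (pow_mem' hF hx n) :
              ((n.factorial : K))⁻¹ • x ^ n ∈ F n))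
          (summable_of_mem hF fun n =>
            (Submodule.smul_mem _ _ (pow_mem' hF hy n) :
              ((n.factorial : K))⁻¹ • y ^ n ∈ F n))
        simp_rw [← smul_sub] at hts
        rw [hts]
        exact (show expS K x - expS K y = 0 by rw [h, sub_self]).symm
      rw [Summable.tsum_eq_zero_add hsx, Summable.tsum_eq_zero_add ((summable_nat_add_iff 1).mpr hsx)] at hzero
      simp only [pow_zero, sub_self, smul_zero, zero_add, Nat.factorial_one, Nat.cast_one,
        inv_one, pow_one, one_smul] at hzero
      have hxy2 : x - y = - ∑' n : ℕ, (((n + 1 + 1).factorial : K))⁻¹ •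
          (x ^ (n + 1 + 1) - y ^ (n + 1 + 1)) := by
        rw [eq_neg_iff_add_eq_zero]
        rw [eq_comm] at hzero
        linear_combination (norm := abel) hzero
      rw [hxy2]
      refine neg_mem (tsum_mem' hF (fun n => ?_) ((summable_nat_add_iff 2).mpr hsx))
      refine hFanti hF (by omega) (Submodule.smul_mem _ _ (hpow m ih (n + 1)))
  exact sub_eq_zero.mp (mem_all_eq_zero hF fun m => hd m)

end AnalyticPart

theorem stmt9 (F : ℕ → Submodule K A) (hF : IsCompleteFiltration K F)
    (P : A →ₗ[K] A) (hP : ∀ n, ∀ x ∈ F n, P x ∈ F n)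
    (χ : A → A) (hχmem : ∀ a ∈ F 1, χ a ∈ F 1)
    (hχ : ∀ a ∈ F 1, χ a = a - BCHs K (P (χ a)) (χ a - P (χ a))) :
    ∀ u ∈ F 1, χ u = u + BCHs K (-(P (χ u))) u := by
  intro u hu
  have hcF : χ u ∈ F 1 := hχmem u hu
  have hp : P (χ u) ∈ F 1 := hP 1 _ hcF
  have hq : χ u - P (χ u) ∈ F 1 := sub_mem hcF hp
  have heq := hχ u hu
  rw [BCHs] at heq
  set w := expS K (P (χ u)) * expS K (χ u - P (χ u)) with hwdef
  have hw : w - 1 ∈ F 1 := by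
    have h1 := expS_sub_one_mem hF hp
    have h2 := expS_sub_one_mem hF hq
    have hiden : w - 1 = (expS K (P (χ u)) - 1) * (expS K (χ u - P (χ u)) - 1)
        + (expS K (P (χ u)) - 1) + (expS K (χ u - P (χ u)) - 1) := by
      rw [hwdef]; noncomm_ring
    rw [hiden]
    exact add_mem (add_mem (hFanti hF one_le_two (hF.2.2.1 1 1 _ h1 _ h2)) h1) h2
  have hlogw : logS K w = u := by
    have h4 : χ u = (u - logS K w) + χ u := by
      nth_rewrite 1 [heq]
      abel
    have h5 : u - logS K w = 0 := right_eq_add.mp h4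
    exact (sub_eq_zero.mp h5).symm
  have hexpu : expS K u = w := by rw [← hlogw]; exact exp_logS hF hw
  rw [BCHs]
  have hv : expS K (-(P (χ u))) * expS K u = expS K (χ u - P (χ u)) := by
    rw [hexpu, hwdef, ← mul_assoc, exp_neg_mul_exp hF hp, one_mul]
  rw [hv]
  have hq1 : logS K (expS K (χ u - P (χ u))) = χ u - P (χ u) := by
    have hmem := expS_sub_one_mem hF hq
    exact exp_inj hF (logS_mem hF hmem) hq (exp_logS hF hmem)
  rw [hq1]
  abel
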